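/- Let μ₃ > 0 be real. In the ring ℝ[[g]] of formal power series in one variable g, there is a unique pair of power series (t₁, t₂) with constant coefficients (−μ₃^{1/3}, μ₃^{2/3}) satisfying 2t₁³ − 3t₁t₂ − μ₃ = 0 and 3t₁⁴ − 3t₂² − 4g = 0 (where g also denotes the power series X). Moreover, the coefficients of g¹ through g⁶ in t₁ are −2/(3μ₃), 2/(3μ₃^{7/3}), −76/(81μ₃^{11/3}), 110/(81μ₃⁵), −412/(243μ₃^{19/3}), 6748/(6561μ₃^{23/3}), and the coefficients of g¹ through g⁶ in t₂ are 2/(3μ₃^{2/3}), −2/(9μ₃²), −4/(81μ₃^{10/3}), 170/(243μ₃^{14/3}), −580/(243μ₃⁶), 42476/(6561μ₃^{22/3}). -/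

import Mathlib

open PowerSeries

open Finset in
set_option maxHeartbeats 4000000 in
lemma coeffs_sol (a : ℝ) (ha : 0 < a) (t₁ t₂ : PowerSeries ℝ)
    (ht1 : constantCoeff t₁ = -a) (ht2 : constantCoeff t₂ = a ^ 2)
    (hF1 : 2 * t₁ ^ 3 - 3 * t₁ * t₂ - PowerSeries.C (a ^ 3) = 0)
    (hF2 : 3 * t₁ ^ 4 - 3 * t₂ ^ 2 - 4 * PowerSeries.X = 0) :
    coeff 1 t₁ = -2 / (3 * a ^ 3) ∧
    coeff 2 t₁ = 2 / (3 * a ^ 7) ∧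
    coeff 3 t₁ = -76 / (81 * a ^ 11) ∧
    coeff 4 t₁ = 110 / (81 * a ^ 15) ∧
    coeff 5 t₁ = -412 / (243 * a ^ 19) ∧
    coeff 6 t₁ = 6748 / (6561 * a ^ 23) ∧
    coeff 1 t₂ = 2 / (3 * a ^ 2) ∧
    coeff 2 t₂ = -2 / (9 * a ^ 6) ∧
    coeff 3 t₂ = -4 / (81 * a ^ 10) ∧
    coeff 4 t₂ = 170 / (243 * a ^ 14) ∧
    coeff 5 t₂ = -580 / (243 * a ^ 18) ∧
    coeff 6 t₂ = 42476 / (6561 * a ^ 22) := by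
  have hane : a ≠ 0 := ne_of_gt ha
  have e11 := congrArg (coeff 1) hF1
  have e12 := congrArg (coeff 1) hF2
  simp only [map_sub, map_zero, ← map_ofNat (PowerSeries.C) 2, ← map_ofNat (PowerSeries.C) 3,
    ← map_ofNat (PowerSeries.C) 4, coeff_C_mul,
    show t₁ ^ 3 = t₁ * t₁ * t₁ by ring, show t₁ ^ 4 = t₁ * t₁ * t₁ * t₁ by ring,
    show t₂ ^ 2 = t₂ * t₂ by ring] at e11 e12
  rw [show (PowerSeries.C) 3 * t₁ * t₂ = (PowerSeries.C) 3 * (t₁ * t₂) by ring] at e11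
  simp only [coeff_C_mul, coeff_mul, Finset.Nat.sum_antidiagonal_eq_sum_range_succ_mk,
    Finset.sum_range_succ, Finset.sum_range_zero, coeff_C, coeff_X] at e11 e12
  norm_num at e11 e12
  rw [ht1, ht2] at e11 e12
  have hu1 : coeff 1 t₁ = -2 / (3 * a ^ 3) := by
    rw [eq_div_iff (by positivity : (3:ℝ) * a ^ 3 ≠ 0)]
    linear_combination (norm := (field_simp; ring)) (-((1 : ℝ) * a ^ 1)) * e11 + (-((1/2 : ℝ))) * e12
  have hv1 : coeff 1 t₂ = 2 / (3 * a ^ 2) := by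
    rw [eq_div_iff (by positivity : (3:ℝ) * a ^ 2 ≠ 0)]
    linear_combination (norm := (field_simp; ring)) ((2 : ℝ) * a ^ 1) * e11 + ((1/2 : ℝ)) * e12
  have e21 := congrArg (coeff 2) hF1
  have e22 := congrArg (coeff 2) hF2
  simp only [map_sub, map_zero, ← map_ofNat (PowerSeries.C) 2, ← map_ofNat (PowerSeries.C) 3,
    ← map_ofNat (PowerSeries.C) 4, coeff_C_mul,
    show t₁ ^ 3 = t₁ * t₁ * t₁ by ring, show t₁ ^ 4 = t₁ * t₁ * t₁ * t₁ by ring,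
    show t₂ ^ 2 = t₂ * t₂ by ring] at e21 e22
  rw [show (PowerSeries.C) 3 * t₁ * t₂ = (PowerSeries.C) 3 * (t₁ * t₂) by ring] at e21
  simp only [coeff_C_mul, coeff_mul, Finset.Nat.sum_antidiagonal_eq_sum_range_succ_mk,
    Finset.sum_range_succ, Finset.sum_range_zero, coeff_C, coeff_X] at e21 e22
  norm_num at e21 e22
  rw [ht1, ht2, hu1, hv1] at e21 e22
  have hu2 : coeff 2 t₁ = 2 / (3 * a ^ 7) := by
    rw [eq_div_iff (by positivity : (3:ℝ) * a ^ 7 ≠ 0)]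
    linear_combination (norm := (field_simp; ring)) (-((1 : ℝ) * a ^ 5)) * e21 + (-((1/2 : ℝ) * a ^ 4)) * e22
  have hv2 : coeff 2 t₂ = -2 / (9 * a ^ 6) := by
    rw [eq_div_iff (by positivity : (9:ℝ) * a ^ 6 ≠ 0)]
    linear_combination (norm := (field_simp; ring)) ((6 : ℝ) * a ^ 5) * e21 + ((3/2 : ℝ) * a ^ 4) * e22
  have e31 := congrArg (coeff 3) hF1
  have e32 := congrArg (coeff 3) hF2
  simp only [map_sub, map_zero, ← map_ofNat (PowerSeries.C) 2, ← map_ofNat (PowerSeries.C) 3,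
    ← map_ofNat (PowerSeries.C) 4, coeff_C_mul,
    show t₁ ^ 3 = t₁ * t₁ * t₁ by ring, show t₁ ^ 4 = t₁ * t₁ * t₁ * t₁ by ring,
    show t₂ ^ 2 = t₂ * t₂ by ring] at e31 e32
  rw [show (PowerSeries.C) 3 * t₁ * t₂ = (PowerSeries.C) 3 * (t₁ * t₂) by ring] at e31
  simp only [coeff_C_mul, coeff_mul, Finset.Nat.sum_antidiagonal_eq_sum_range_succ_mk,
    Finset.sum_range_succ, Finset.sum_range_zero, coeff_C, coeff_X] at e31 e32
  norm_num at e31 e32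
  rw [ht1, ht2, hu1, hv1, hu2, hv2] at e31 e32
  have hu3 : coeff 3 t₁ = -76 / (81 * a ^ 11) := by
    rw [eq_div_iff (by positivity : (81:ℝ) * a ^ 11 ≠ 0)]
    linear_combination (norm := (field_simp; ring)) (-((27 : ℝ) * a ^ 9)) * e31 + (-((27/2 : ℝ) * a ^ 8)) * e32
  have hv3 : coeff 3 t₂ = -4 / (81 * a ^ 10) := by
    rw [eq_div_iff (by positivity : (81:ℝ) * a ^ 10 ≠ 0)]
    linear_combination (norm := (field_simp; ring)) ((54 : ℝ) * a ^ 9) * e31 + ((27/2 : ℝ) * a ^ 8) * e32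
  have e41 := congrArg (coeff 4) hF1
  have e42 := congrArg (coeff 4) hF2
  simp only [map_sub, map_zero, ← map_ofNat (PowerSeries.C) 2, ← map_ofNat (PowerSeries.C) 3,
    ← map_ofNat (PowerSeries.C) 4, coeff_C_mul,
    show t₁ ^ 3 = t₁ * t₁ * t₁ by ring, show t₁ ^ 4 = t₁ * t₁ * t₁ * t₁ by ring,
    show t₂ ^ 2 = t₂ * t₂ by ring] at e41 e42
  rw [show (PowerSeries.C) 3 * t₁ * t₂ = (PowerSeries.C) 3 * (t₁ * t₂) by ring] at e41
  simp only [coeff_C_mul, coeff_mul, Finset.Nat.sum_antidiagonal_eq_sum_range_succ_mk,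
    Finset.sum_range_succ, Finset.sum_range_zero, coeff_C, coeff_X] at e41 e42
  norm_num at e41 e42
  rw [ht1, ht2, hu1, hv1, hu2, hv2, hu3, hv3] at e41 e42
  have hu4 : coeff 4 t₁ = 110 / (81 * a ^ 15) := by
    rw [eq_div_iff (by positivity : (81:ℝ) * a ^ 15 ≠ 0)]
    linear_combination (norm := (field_simp; ring)) (-((27 : ℝ) * a ^ 13)) * e41 + (-((27/2 : ℝ) * a ^ 12)) * e42
  have hv4 : coeff 4 t₂ = 170 / (243 * a ^ 14) := by
    rw [eq_div_iff (by positivity : (243:ℝ) * a ^ 14 ≠ 0)]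
    linear_combination (norm := (field_simp; ring)) ((162 : ℝ) * a ^ 13) * e41 + ((81/2 : ℝ) * a ^ 12) * e42
  have e51 := congrArg (coeff 5) hF1
  have e52 := congrArg (coeff 5) hF2
  simp only [map_sub, map_zero, ← map_ofNat (PowerSeries.C) 2, ← map_ofNat (PowerSeries.C) 3,
    ← map_ofNat (PowerSeries.C) 4, coeff_C_mul,
    show t₁ ^ 3 = t₁ * t₁ * t₁ by ring, show t₁ ^ 4 = t₁ * t₁ * t₁ * t₁ by ring,
    show t₂ ^ 2 = t₂ * t₂ by ring] at e51 e52
  rw [show (PowerSeries.C) 3 * t₁ * t₂ = (PowerSeries.C) 3 * (t₁ * t₂) by ring] at e51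
  simp only [coeff_C_mul, coeff_mul, Finset.Nat.sum_antidiagonal_eq_sum_range_succ_mk,
    Finset.sum_range_succ, Finset.sum_range_zero, coeff_C, coeff_X] at e51 e52
  norm_num at e51 e52
  rw [ht1, ht2, hu1, hv1, hu2, hv2, hu3, hv3, hu4, hv4] at e51 e52
  have hu5 : coeff 5 t₁ = -412 / (243 * a ^ 19) := by
    rw [eq_div_iff (by positivity : (243:ℝ) * a ^ 19 ≠ 0)]
    linear_combination (norm := (field_simp; ring)) (-((81 : ℝ) * a ^ 17)) * e51 + (-((81/2 : ℝ) * a ^ 16)) * e52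
  have hv5 : coeff 5 t₂ = -580 / (243 * a ^ 18) := by
    rw [eq_div_iff (by positivity : (243:ℝ) * a ^ 18 ≠ 0)]
    linear_combination (norm := (field_simp; ring)) ((162 : ℝ) * a ^ 17) * e51 + ((81/2 : ℝ) * a ^ 16) * e52
  have e61 := congrArg (coeff 6) hF1
  have e62 := congrArg (coeff 6) hF2
  simp only [map_sub, map_zero, ← map_ofNat (PowerSeries.C) 2, ← map_ofNat (PowerSeries.C) 3,
    ← map_ofNat (PowerSeries.C) 4, coeff_C_mul,
    show t₁ ^ 3 = t₁ * t₁ * t₁ by ring, show t₁ ^ 4 = t₁ * t₁ * t₁ * t₁ by ring,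
    show t₂ ^ 2 = t₂ * t₂ by ring] at e61 e62
  rw [show (PowerSeries.C) 3 * t₁ * t₂ = (PowerSeries.C) 3 * (t₁ * t₂) by ring] at e61
  simp only [coeff_C_mul, coeff_mul, Finset.Nat.sum_antidiagonal_eq_sum_range_succ_mk,
    Finset.sum_range_succ, Finset.sum_range_zero, coeff_C, coeff_X] at e61 e62
  norm_num at e61 e62
  rw [ht1, ht2, hu1, hv1, hu2, hv2, hu3, hv3, hu4, hv4, hu5, hv5] at e61 e62
  have hu6 : coeff 6 t₁ = 6748 / (6561 * a ^ 23) := by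
    rw [eq_div_iff (by positivity : (6561:ℝ) * a ^ 23 ≠ 0)]
    linear_combination (norm := (field_simp; ring)) (-((2187 : ℝ) * a ^ 21)) * e61 + (-((2187/2 : ℝ) * a ^ 20)) * e62
  have hv6 : coeff 6 t₂ = 42476 / (6561 * a ^ 22) := by
    rw [eq_div_iff (by positivity : (6561:ℝ) * a ^ 22 ≠ 0)]
    linear_combination (norm := (field_simp; ring)) ((4374 : ℝ) * a ^ 21) * e61 + ((2187/2 : ℝ) * a ^ 20) * e62
  exact ⟨hu1, hu2, hu3, hu4, hu5, hu6, hv1, hv2, hv3, hv4, hv5, hv6⟩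

open PowerSeries

lemma mem_span_X_pow_iff (f : PowerSeries ℝ) (n : ℕ) :
    f ∈ (Ideal.span {(X : PowerSeries ℝ)}) ^ n ↔ ∀ m < n, coeff m f = 0 := by
  rw [Ideal.span_singleton_pow, Ideal.mem_span_singleton]
  exact PowerSeries.X_pow_dvd_iff

lemma psHaus : IsHausdorff (Ideal.span {(X : PowerSeries ℝ)}) (PowerSeries ℝ) := by
    constructor
    intro x hx
    ext n
    have h := hx (n + 1)
    rw [SModEq.zero, smul_eq_mul, Ideal.mul_top, mem_span_X_pow_iff] at h
    simpa using h n (Nat.lt_succ_self n)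
lemma psPrec : IsPrecomplete (Ideal.span {(X : PowerSeries ℝ)}) (PowerSeries ℝ) := by
    constructor
    intro f hf
    refine ⟨PowerSeries.mk fun n => coeff n (f (n + 1)), fun n => ?_⟩
    rw [SModEq.sub_mem, smul_eq_mul, Ideal.mul_top, mem_span_X_pow_iff]
    intro m hm
    rw [map_sub, coeff_mk]
    rcases le_total n (m + 1) with h | h
    · have := hf h
      rw [SModEq.sub_mem, smul_eq_mul, Ideal.mul_top, mem_span_X_pow_iff] at this
      have := this m hm
      rw [map_sub] at this
      linarith [this]
    · have := hf h
      rw [SModEq.sub_mem, smul_eq_mul, Ideal.mul_top, mem_span_X_pow_iff] at this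
      have := this m (Nat.lt_succ_self m)
      rw [map_sub] at this
      linarith [this]

lemma psAdicComplete : IsAdicComplete (Ideal.span {(X : PowerSeries ℝ)}) (PowerSeries ℝ) :=
  { psHaus, psPrec with }

lemma exists_sol (a : ℝ) (ha : a ≠ 0) :
    ∃ t₁ t₂ : PowerSeries ℝ,
      constantCoeff t₁ = -a ∧ constantCoeff t₂ = a ^ 2 ∧
      2 * t₁ ^ 3 - 3 * t₁ * t₂ - PowerSeries.C (a ^ 3) = 0 ∧
      3 * t₁ ^ 4 - 3 * t₂ ^ 2 - 4 * PowerSeries.X = 0 := by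
  haveI := psAdicComplete
  haveI : HenselianRing (PowerSeries ℝ) (Ideal.span {(X : PowerSeries ℝ)}) :=
    IsAdicComplete.henselianRing _ _
  set cA : PowerSeries ℝ := PowerSeries.C a with hcA
  -- the monic sextic  Y^6 + 100 a^3 Y^3 − 1500 X Y^2 − 3125 a^6
  set F : Polynomial (PowerSeries ℝ) :=
    Polynomial.X ^ 6 + (Polynomial.C (100 * cA ^ 3) * Polynomial.X ^ 3 -
      Polynomial.C (1500 * PowerSeries.X) * Polynomial.X ^ 2 -
      Polynomial.C (3125 * cA ^ 6)) with hF
  have hmonic : F.Monic := by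
    apply Polynomial.monic_X_pow_add
    have h5 : (Polynomial.C (100 * cA ^ 3) * Polynomial.X ^ 3 -
        Polynomial.C (1500 * PowerSeries.X) * Polynomial.X ^ 2 -
        Polynomial.C (3125 * cA ^ 6)).degree ≤ 5 := by compute_degree; norm_num
    exact lt_of_le_of_lt h5 (by norm_num)
  have heval : F.eval (PowerSeries.C (-5 * a)) = X * (-37500 * cA ^ 2) := by
    simp only [hF, Polynomial.eval_add, Polynomial.eval_sub, Polynomial.eval_mul,
      Polynomial.eval_pow, Polynomial.eval_C, Polynomial.eval_X]
    have : PowerSeries.C (-5 * a) = -5 * cA := by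
      rw [hcA, map_mul, map_neg, map_ofNat]
    rw [this]; ring
  have hderiv : (Polynomial.derivative F).eval (PowerSeries.C (-5 * a)) =
      PowerSeries.C (-11250 * a ^ 5) + X * (15000 * cA) := by
    simp only [hF]
    simp only [Polynomial.derivative_add, Polynomial.derivative_sub, Polynomial.derivative_mul,
      Polynomial.derivative_C, Polynomial.derivative_X_pow, zero_mul, zero_add,
      Polynomial.eval_add, Polynomial.eval_sub, Polynomial.eval_mul, Polynomial.eval_pow,
      Polynomial.eval_C, Polynomial.eval_X, Polynomial.eval_natCast,
      Polynomial.eval_zero, sub_zero]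
    have h1 : PowerSeries.C (-5 * a) = -5 * cA := by rw [hcA, map_mul, map_neg, map_ofNat]
    have h2 : PowerSeries.C (-11250 * a ^ 5) = -11250 * cA ^ 5 := by
      rw [hcA, map_mul, map_pow, map_neg, map_ofNat]
    rw [h1, h2]
    push_cast
    try ring
  have hmem : F.eval (PowerSeries.C (-5 * a)) ∈ Ideal.span {(X : PowerSeries ℝ)} := by
    rw [heval, Ideal.mem_span_singleton]; exact dvd_mul_right _ _
  obtain ⟨w, hwroot, hwmem⟩ := this.is_henselian F hmonic (PowerSeries.C (-5 * a))
    hmem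
    (by
      have : (Ideal.Quotient.mk (Ideal.span {(X : PowerSeries ℝ)}))
          ((Polynomial.derivative F).eval (PowerSeries.C (-5 * a))) =
          (Ideal.Quotient.mk (Ideal.span {(X : PowerSeries ℝ)}))
            (PowerSeries.C (-11250 * a ^ 5)) := by
        have hz : (Ideal.Quotient.mk (Ideal.span {(X : PowerSeries ℝ)}))
            (X * (15000 * cA)) = 0 :=
          Ideal.Quotient.eq_zero_iff_mem.mpr
            (Ideal.mem_span_singleton.mpr (dvd_mul_right _ _))
        rw [hderiv, map_add, hz, add_zero]
      rw [this]
      apply RingHom.isUnit_map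
      rw [PowerSeries.isUnit_iff_constantCoeff, constantCoeff_C]
      simp [isUnit_iff_ne_zero, ha])
  -- constant coefficient of w
  have hw0 : constantCoeff w = -5 * a := by
    rw [Ideal.mem_span_singleton, PowerSeries.X_dvd_iff, map_sub, constantCoeff_C] at hwmem
    linarith [hwmem]
  set t₁ : PowerSeries ℝ := PowerSeries.C (1/5 : ℝ) * w with ht₁def
  have h5 : w = 5 * t₁ := by
    rw [ht₁def, ← mul_assoc]
    have h51 : (5 : PowerSeries ℝ) * PowerSeries.C (1/5 : ℝ) = 1 := by
      rw [← map_ofNat (PowerSeries.C) 5, ← map_mul]; norm_num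
    rw [h51, one_mul]
  have hr : w ^ 6 + 100 * cA ^ 3 * w ^ 3 - 1500 * X * w ^ 2 - 3125 * cA ^ 6 = 0 := by
    have h := hwroot
    simp only [Polynomial.IsRoot, hF, Polynomial.eval_add, Polynomial.eval_sub,
      Polynomial.eval_mul, Polynomial.eval_pow, Polynomial.eval_C, Polynomial.eval_X] at h
    linear_combination h
  rw [h5] at hr
  have hp : 15625 * t₁ ^ 6 + 12500 * cA ^ 3 * t₁ ^ 3 - 37500 * X * t₁ ^ 2
      - 3125 * cA ^ 6 = 0 := by linear_combination hr
  have ht₁0 : constantCoeff t₁ = -a := by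
    rw [ht₁def, map_mul, constantCoeff_C, hw0]; ring
  have ht₁ne : constantCoeff t₁ ≠ 0 := by rw [ht₁0]; exact neg_ne_zero.mpr ha
  have ht₁ne' : t₁ ≠ 0 := by
    intro h; apply ht₁ne; rw [h, map_zero]
  have hinv : t₁ * t₁⁻¹ = 1 := PowerSeries.mul_inv_cancel _ ht₁ne
  set t₂ : PowerSeries ℝ := PowerSeries.C (1/3 : ℝ) * t₁⁻¹ * (2 * t₁ ^ 3 - cA ^ 3) with ht₂def
  have hcAC : PowerSeries.C (a ^ 3) = cA ^ 3 := by rw [hcA, map_pow]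
  have key : (3 : PowerSeries ℝ) * PowerSeries.C (1/3 : ℝ) * (t₁ * t₁⁻¹) = 1 := by
    rw [hinv, mul_one]
    rw [← map_ofNat (PowerSeries.C) 3, ← map_mul]; norm_num
  have hF1 : 2 * t₁ ^ 3 - 3 * t₁ * t₂ - PowerSeries.C (a ^ 3) = 0 := by
    rw [hcAC, ht₂def]
    linear_combination (cA ^ 3 - 2 * t₁ ^ 3) * key
  have ht₂0 : constantCoeff t₂ = a ^ 2 := by
    rw [ht₂def, map_mul, map_mul, constantCoeff_C, map_sub, map_mul, map_pow, map_pow,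
      PowerSeries.constantCoeff_inv, ht₁0, hcA, constantCoeff_C]
    rw [map_ofNat]
    field_simp
    ring
  have hF1' : 2 * t₁ ^ 3 - 3 * t₁ * t₂ - cA ^ 3 = 0 := by rw [← hcAC]; exact hF1
  have h9 : (28125 : PowerSeries ℝ) * t₁ ^ 2 * (3 * t₁ ^ 4 - 3 * t₂ ^ 2 - 4 * X) = 0 := by
    linear_combination 3 * hp + (9375 * (2 * t₁ ^ 3 - cA ^ 3 + 3 * t₁ * t₂)) * hF1'
  have h28 : (28125 : PowerSeries ℝ) * t₁ ^ 2 ≠ 0 := by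
    apply mul_ne_zero _ (pow_ne_zero _ ht₁ne')
    intro h
    have := congrArg (constantCoeff (R := ℝ)) h
    rw [map_ofNat, map_zero] at this
    norm_num at this
  exact ⟨t₁, t₂, ht₁0, ht₂0, hF1, (mul_eq_zero.mp h9).resolve_left h28⟩


lemma uniq_sol (a : ℝ) (ha : a ≠ 0) (t₁ t₂ s₁ s₂ : PowerSeries ℝ)
    (ht1 : constantCoeff t₁ = -a) (ht2 : constantCoeff t₂ = a ^ 2)
    (hs1 : constantCoeff s₁ = -a) (hs2 : constantCoeff s₂ = a ^ 2)
    (hT1 : 2 * t₁ ^ 3 - 3 * t₁ * t₂ - PowerSeries.C (a ^ 3) = 0)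
    (hT2 : 3 * t₁ ^ 4 - 3 * t₂ ^ 2 - 4 * PowerSeries.X = 0)
    (hS1 : 2 * s₁ ^ 3 - 3 * s₁ * s₂ - PowerSeries.C (a ^ 3) = 0)
    (hS2 : 3 * s₁ ^ 4 - 3 * s₂ ^ 2 - 4 * PowerSeries.X = 0) :
    t₁ = s₁ ∧ t₂ = s₂ := by
  set d₁ := t₁ - s₁ with hd₁
  set d₂ := t₂ - s₂ with hd₂
  have hA : d₁ * (2 * (t₁ ^ 2 + t₁ * s₁ + s₁ ^ 2) - 3 * s₂) - 3 * t₁ * d₂ = 0 := by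
    rw [hd₁, hd₂]; linear_combination hT1 - hS1
  have hB : d₁ * (3 * (t₁ ^ 3 + t₁ ^ 2 * s₁ + t₁ * s₁ ^ 2 + s₁ ^ 3)) - 3 * d₂ * (t₂ + s₂) = 0 := by
    rw [hd₁, hd₂]; linear_combination hT2 - hS2
  set D : PowerSeries ℝ := (-3) * (t₂ + s₂) * (2 * (t₁ ^ 2 + t₁ * s₁ + s₁ ^ 2) - 3 * s₂)
      + 3 * t₁ * (3 * (t₁ ^ 3 + t₁ ^ 2 * s₁ + t₁ * s₁ ^ 2 + s₁ ^ 3)) with hD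
  have hDd : d₁ * D = 0 := by
    rw [hD]; linear_combination (-3 * (t₂ + s₂)) * hA + (3 * t₁) * hB
  have hDne : D ≠ 0 := by
    intro h
    have h0 := congrArg (constantCoeff (R := ℝ)) h
    rw [hD] at h0
    simp only [map_add, map_mul, map_sub, map_pow, map_neg, map_ofNat, map_zero,
      ht1, ht2, hs1, hs2] at h0
    have : (18 : ℝ) * a ^ 4 = 0 := by linarith [h0]
    have ha4 : a ^ 4 ≠ 0 := pow_ne_zero _ ha
    simp [ha4] at this
  have hd1 : d₁ = 0 := by
    rcases mul_eq_zero.mp hDd with h | h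
    · exact h
    · exact absurd h hDne
  have ht₁ne : t₁ ≠ 0 := by
    intro h; rw [h, map_zero] at ht1; exact ha (by linarith [ht1])
  have hd2 : d₂ = 0 := by
    rw [hd1, zero_mul, zero_sub, neg_eq_zero] at hA
    rcases mul_eq_zero.mp hA with h | h
    · rcases mul_eq_zero.mp h with h' | h'
      · exfalso
        have := congrArg (constantCoeff (R := ℝ)) h'
        rw [map_ofNat, map_zero] at this; norm_num at this
      · exact absurd h' ht₁ne
    · exact h
  constructor
  · have := sub_eq_zero.mp (hd₁ ▸ hd1); exact this
  · have := sub_eq_zero.mp (hd₂ ▸ hd2); exact this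

/-- In `ℝ⟦g⟧` there is a unique pair of power series `(t₁, t₂)` with constant
coefficients `(−μ₃^{1/3}, μ₃^{2/3})` satisfying `2t₁³ − 3t₁t₂ − μ₃ = 0` and
`3t₁⁴ − 3t₂² − 4g = 0`, and their coefficients of `g¹,…,g⁶` are as displayed
(the branch-point data of the m = 3 multicritical CDT genus-zero disk amplitude
with `μ₂ = 0`). -/
theorem m3_multicritical_CDT_branch_point_series (μ₃ : ℝ) (hμ : 0 < μ₃) :
    (∃! p : PowerSeries ℝ × PowerSeries ℝ,
      PowerSeries.constantCoeff p.1 = -μ₃ ^ ((1 : ℝ) / 3) ∧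
      PowerSeries.constantCoeff p.2 = μ₃ ^ ((2 : ℝ) / 3) ∧
      2 * p.1 ^ 3 - 3 * p.1 * p.2 - PowerSeries.C μ₃ = 0 ∧
      3 * p.1 ^ 4 - 3 * p.2 ^ 2 - 4 * PowerSeries.X = 0)
    ∧ ∀ t₁ t₂ : PowerSeries ℝ,
        PowerSeries.constantCoeff t₁ = -μ₃ ^ ((1 : ℝ) / 3) →
        PowerSeries.constantCoeff t₂ = μ₃ ^ ((2 : ℝ) / 3) →
        2 * t₁ ^ 3 - 3 * t₁ * t₂ - PowerSeries.C μ₃ = 0 →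
        3 * t₁ ^ 4 - 3 * t₂ ^ 2 - 4 * PowerSeries.X = 0 →
        (PowerSeries.coeff 1 t₁ = -2 / (3 * μ₃) ∧
         PowerSeries.coeff 2 t₁ = 2 / (3 * μ₃ ^ ((7 : ℝ) / 3)) ∧
         PowerSeries.coeff 3 t₁ = -76 / (81 * μ₃ ^ ((11 : ℝ) / 3)) ∧
         PowerSeries.coeff 4 t₁ = 110 / (81 * μ₃ ^ 5) ∧
         PowerSeries.coeff 5 t₁ = -412 / (243 * μ₃ ^ ((19 : ℝ) / 3)) ∧
         PowerSeries.coeff 6 t₁ = 6748 / (6561 * μ₃ ^ ((23 : ℝ) / 3))) ∧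
        (PowerSeries.coeff 1 t₂ = 2 / (3 * μ₃ ^ ((2 : ℝ) / 3)) ∧
         PowerSeries.coeff 2 t₂ = -2 / (9 * μ₃ ^ 2) ∧
         PowerSeries.coeff 3 t₂ = -4 / (81 * μ₃ ^ ((10 : ℝ) / 3)) ∧
         PowerSeries.coeff 4 t₂ = 170 / (243 * μ₃ ^ ((14 : ℝ) / 3)) ∧
         PowerSeries.coeff 5 t₂ = -580 / (243 * μ₃ ^ 6) ∧
         PowerSeries.coeff 6 t₂ = 42476 / (6561 * μ₃ ^ ((22 : ℝ) / 3))) := by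
  set a : ℝ := μ₃ ^ ((1 : ℝ) / 3) with hadef
  have ha : 0 < a := Real.rpow_pos_of_pos hμ _
  have hane : a ≠ 0 := ne_of_gt ha
  have hk : ∀ k : ℕ, μ₃ ^ ((k : ℝ) / 3) = a ^ k := by
    intro k
    rw [hadef, ← Real.rpow_natCast (μ₃ ^ ((1 : ℝ) / 3)) k, ← Real.rpow_mul hμ.le]
    congr 1
    ring
  have ha3 : a ^ 3 = μ₃ := by
    rw [hadef, ← Real.rpow_natCast (μ₃ ^ ((1 : ℝ) / 3)) 3, ← Real.rpow_mul hμ.le]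
    norm_num
  have ha2' : μ₃ ^ ((2 : ℝ) / 3) = a ^ 2 := by have := hk 2; norm_num at this; exact this
  have ha7 : μ₃ ^ ((7 : ℝ) / 3) = a ^ 7 := by have := hk 7; norm_num at this; exact this
  have ha10 : μ₃ ^ ((10 : ℝ) / 3) = a ^ 10 := by have := hk 10; norm_num at this; exact this
  have ha11 : μ₃ ^ ((11 : ℝ) / 3) = a ^ 11 := by have := hk 11; norm_num at this; exact this
  have ha14 : μ₃ ^ ((14 : ℝ) / 3) = a ^ 14 := by have := hk 14; norm_num at this; exact this
  have ha19 : μ₃ ^ ((19 : ℝ) / 3) = a ^ 19 := by have := hk 19; norm_num at this; exact this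
  have ha22 : μ₃ ^ ((22 : ℝ) / 3) = a ^ 22 := by have := hk 22; norm_num at this; exact this
  have ha23 : μ₃ ^ ((23 : ℝ) / 3) = a ^ 23 := by have := hk 23; norm_num at this; exact this
  have hm5 : μ₃ ^ (5 : ℕ) = a ^ 15 := by rw [← ha3, ← pow_mul]
  have hm2 : μ₃ ^ (2 : ℕ) = a ^ 6 := by rw [← ha3, ← pow_mul]
  have hm6 : μ₃ ^ (6 : ℕ) = a ^ 18 := by rw [← ha3, ← pow_mul]
  constructor
  · obtain ⟨t₁, t₂, h1, h2, h3, h4⟩ := exists_sol a hane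
    refine ⟨⟨t₁, t₂⟩, ⟨h1, by rw [ha2']; exact h2, by rw [← ha3]; exact h3, h4⟩, ?_⟩
    rintro ⟨s₁, s₂⟩ ⟨g1, g2, g3, g4⟩
    obtain ⟨eq1, eq2⟩ := uniq_sol a hane s₁ s₂ t₁ t₂ g1 (by rw [ha2'] at g2; exact g2)
      h1 h2 (by rw [ha3]; exact g3) g4 h3 h4
    exact Prod.ext eq1 eq2
  · intro t₁ t₂ h1 h2 h3 h4
    rw [ha2'] at h2
    rw [← ha3] at h3
    obtain ⟨c1, c2, c3, c4, c5, c6, d1, d2, d3, d4, d5, d6⟩ :=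
      coeffs_sol a ha t₁ t₂ h1 h2 h3 h4
    refine ⟨⟨?_, ?_, ?_, ?_, ?_, ?_⟩, ?_, ?_, ?_, ?_, ?_, ?_⟩
    · rw [← ha3]; exact c1
    · rw [ha7]; exact c2
    · rw [ha11]; exact c3
    · rw [hm5]; exact c4
    · rw [ha19]; exact c5
    · rw [ha23]; exact c6
    · rw [ha2']; exact d1
    · rw [hm2]; exact d2
    · rw [ha10]; exact d3
    · rw [ha14]; exact d4
    · rw [hm6]; exact d5
    · rw [ha22]; exact d6
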